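/- Trivial delta method, bilinear form: let m be a positive integer and let a, b : ℤ → ℂ be finitely supported functions such that |n − r| < m whenever a(n) ≠ 0 and b(r) ≠ 0. Then Σ_{n∈ℤ} a(n) b(n) = (1/m) Σ_{c ∣ m} Σ_{α=1,…,c, gcd(α,c)=1} ( Σ_{n∈ℤ} a(n) e(αn/c) ) · ( Σ_{r∈ℤ} b(r) e(−αr/c) ). -/

import Mathlib

open scoped Real BigOperators

/-- `e x = exp(2πix)`. -/
noncomputable def e (x : ℝ) : ℂ := Complex.exp (2 * Real.pi * Complex.I * x)

lemma e_int (k : ℤ) : e (k : ℝ) = 1 := by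
  unfold e
  rw [show (2 * (Real.pi : ℂ) * Complex.I * ((k : ℝ) : ℂ)) = (k : ℤ) * (2 * Real.pi * Complex.I) by push_cast; ring]
  exact Complex.exp_int_mul_two_pi_mul_I k

lemma e_pow (x : ℝ) (n : ℕ) : e x ^ n = e (n * x) := by
  unfold e
  rw [← Complex.exp_nat_mul]
  push_cast
  ring_nf

lemma e_add (x y : ℝ) : e (x + y) = e x * e y := by
  unfold e
  rw [← Complex.exp_add]
  push_cast
  ring_nf

/-- The complete additive character sum mod `m`. -/
lemma sum_e (m : ℕ) (hm : 0 < m) (k : ℤ) :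
    ∑ d ∈ Finset.Icc 1 m, e ((d : ℝ) * (k : ℝ) / (m : ℝ)) =
      if (m : ℤ) ∣ k then (m : ℂ) else 0 := by
  have hm0 : (m : ℝ) ≠ 0 := Nat.cast_ne_zero.mpr hm.ne'
  by_cases hdvd : (m : ℤ) ∣ k
  · rw [if_pos hdvd]
    obtain ⟨t, ht⟩ := hdvd
    have : ∀ d ∈ Finset.Icc 1 m, e ((d : ℝ) * (k : ℝ) / (m : ℝ)) = 1 := by
      intro d _
      have : ((d : ℝ) * (k : ℝ) / (m : ℝ)) = (((d : ℕ) * t : ℤ) : ℝ) := by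
        subst ht; push_cast; field_simp
      rw [this, e_int]
    rw [Finset.sum_congr rfl this, Finset.sum_const, Nat.card_Icc]
    simp
  · rw [if_neg hdvd]
    set ω : ℂ := e ((k : ℝ) / (m : ℝ)) with hω
    have hterm : ∀ d : ℕ, e ((d : ℝ) * (k : ℝ) / (m : ℝ)) = ω ^ d := by
      intro d
      rw [hω, e_pow, mul_div_assoc]
    have hωm : ω ^ m = 1 := by
      rw [hω, e_pow, mul_div_cancel₀ _ hm0]
      exact_mod_cast e_int k
    have hω1 : ω ≠ 1 := by
      intro h
      rw [hω] at h
      unfold e at h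
      rw [Complex.exp_eq_one_iff] at h
      obtain ⟨n, hn⟩ := h
      apply hdvd
      have h2 : (2 * (Real.pi : ℂ) * Complex.I) ≠ 0 := by
        simp [Real.pi_ne_zero, Complex.I_ne_zero]
      have hn' : 2 * (Real.pi : ℂ) * Complex.I * (((k : ℝ) / (m : ℝ) : ℝ) : ℂ) =
          2 * (Real.pi : ℂ) * Complex.I * (n : ℂ) := by rw [hn]; ring
      have : (((k : ℝ) / (m : ℝ) : ℝ) : ℂ) = (n : ℂ) := mul_left_cancel₀ h2 hn'
      have hre : (k : ℝ) / (m : ℝ) = (n : ℝ) := by exact_mod_cast this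
      have : (k : ℝ) = (n : ℝ) * (m : ℝ) := by field_simp at hre; linarith [hre]
      have : k = n * m := by exact_mod_cast this
      exact ⟨n, by linarith [this]⟩
    calc ∑ d ∈ Finset.Icc 1 m, e ((d : ℝ) * (k : ℝ) / (m : ℝ))
        = ∑ d ∈ Finset.Icc 1 m, ω ^ d := Finset.sum_congr rfl fun d _ => hterm d
      _ = ∑ i ∈ Finset.range m, ω ^ (1 + i) := by
          rw [show Finset.Icc 1 m = Finset.Ico 1 (m + 1) by rw [Finset.Ico_add_one_right_eq_Icc],
            Finset.sum_Ico_eq_sum_range]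
          simp
      _ = ω * ∑ i ∈ Finset.range m, ω ^ i := by
          rw [Finset.mul_sum]
          exact Finset.sum_congr rfl fun i _ => by rw [pow_add, pow_one]
      _ = 0 := by
          have := geom_sum_eq hω1 m
          rw [this, hωm]
          simp

/-- Farey-fraction reindexing of the complete sum mod m. -/
lemma farey_sum (m : ℕ) (hm : 0 < m) (k : ℤ) :
    ∑ c ∈ Nat.divisors m,
      ∑ α ∈ (Finset.Icc 1 c).filter (fun α => Nat.gcd α c = 1),
        e ((α : ℝ) * (k : ℝ) / (c : ℝ)) =
    ∑ d ∈ Finset.Icc 1 m, e ((d : ℝ) * (k : ℝ) / (m : ℝ)) := by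
  rw [Finset.sum_sigma']
  refine Finset.sum_nbij' (fun x => x.2 * (m / x.1))
    (fun d => ⟨m / Nat.gcd d m, d / Nat.gcd d m⟩) ?_ ?_ ?_ ?_ ?_
  · rintro ⟨c, α⟩ hx
    simp only [Finset.mem_sigma, Nat.mem_divisors, Finset.mem_filter, Finset.mem_Icc] at hx
    obtain ⟨⟨hc, _⟩, ⟨hα1, hαc⟩, _⟩ := hx
    have hc0 : 0 < c := Nat.pos_of_dvd_of_pos hc hm
    simp only [Finset.mem_Icc]
    constructor
    · have h1 : 0 < m / c := Nat.div_pos (Nat.le_of_dvd hm hc) hc0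
      exact Nat.one_le_iff_ne_zero.mpr (Nat.mul_ne_zero (by omega) h1.ne')
    · calc α * (m / c) ≤ c * (m / c) := Nat.mul_le_mul_right _ hαc
        _ = m := Nat.mul_div_cancel' hc
  · intro d hd
    simp only [Finset.mem_Icc] at hd
    have hd0 : 0 < d := hd.1
    have hg : 0 < Nat.gcd d m := Nat.gcd_pos_of_pos_left _ hd0
    have hgm : Nat.gcd d m ∣ m := Nat.gcd_dvd_right d m
    have hgd : Nat.gcd d m ∣ d := Nat.gcd_dvd_left d m
    simp only [Finset.mem_sigma, Nat.mem_divisors, Finset.mem_filter, Finset.mem_Icc]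
    refine ⟨⟨Nat.div_dvd_of_dvd hgm, hm.ne'⟩, ⟨?_, Nat.div_le_div_right hd.2⟩, ?_⟩
    · exact (Nat.one_le_div_iff hg).mpr (Nat.le_of_dvd hd0 hgd)
    · exact Nat.coprime_div_gcd_div_gcd hg
  · rintro ⟨c, α⟩ hx
    simp only [Finset.mem_sigma, Nat.mem_divisors, Finset.mem_filter, Finset.mem_Icc] at hx
    obtain ⟨⟨hc, _⟩, ⟨hα1, hαc⟩, hcop⟩ := hx
    have hc0 : 0 < c := Nat.pos_of_dvd_of_pos hc hm
    have hmc : m = c * (m / c) := (Nat.mul_div_cancel' hc).symm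
    have hmc0 : 0 < m / c := Nat.div_pos (Nat.le_of_dvd hm hc) hc0
    have hgcd : Nat.gcd (α * (m / c)) m = m / c := by
      have h := Nat.gcd_mul_right α (m / c) c
      rw [hcop, one_mul, ← hmc] at h
      exact h
    have h1 : m / (m / c) = c := Nat.div_div_self hc hm.ne'
    have h2 : α * (m / c) / (m / c) = α := Nat.mul_div_cancel α hmc0
    simp [hgcd, h1, h2]
  · intro d hd
    simp only [Finset.mem_Icc] at hd
    have hd0 : 0 < d := hd.1
    have hg : 0 < Nat.gcd d m := Nat.gcd_pos_of_pos_left _ hd0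
    have hgm : Nat.gcd d m ∣ m := Nat.gcd_dvd_right d m
    have hgd : Nat.gcd d m ∣ d := Nat.gcd_dvd_left d m
    simp only
    rw [Nat.div_div_self hgm hm.ne', Nat.div_mul_cancel hgd]
  · rintro ⟨c, α⟩ hx
    simp only [Finset.mem_sigma, Nat.mem_divisors, Finset.mem_filter, Finset.mem_Icc] at hx
    obtain ⟨⟨hc, _⟩, ⟨hα1, hαc⟩, hcop⟩ := hx
    have hc0 : (c : ℝ) ≠ 0 := Nat.cast_ne_zero.mpr (Nat.pos_of_dvd_of_pos hc hm).ne'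
    have hm0 : (m : ℝ) ≠ 0 := Nat.cast_ne_zero.mpr hm.ne'
    have hcast : ((m / c : ℕ) : ℝ) = (m : ℝ) / (c : ℝ) := Nat.cast_div hc hc0
    congr 1
    push_cast [hcast]
    field_simp

lemma swap_out {β : Type*} [AddCommMonoid β] (s : Finset ℕ) (t : ℕ → Finset ℕ)
    (u : Finset ℤ) (F : ℕ → ℕ → ℤ → β) :
    ∑ c ∈ s, ∑ α ∈ t c, ∑ n ∈ u, F c α n = ∑ n ∈ u, ∑ c ∈ s, ∑ α ∈ t c, F c α n := by
  rw [Finset.sum_sigma', Finset.sum_comm]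
  exact Finset.sum_congr rfl fun n _ => Finset.sum_sigma _ _ _


/-- Trivial delta method, bilinear form: if `a, b : ℤ → ℂ` are finitely supported and
`|n − r| < m` whenever `a n ≠ 0` and `b r ≠ 0`, then
`Σ_n a(n) b(n) = (1/m) Σ_{c ∣ m} Σ_{α mod c, (α,c)=1} (Σ_n a(n) e(αn/c)) (Σ_r b(r) e(−αr/c))`. -/
theorem trivial_delta_bilinear (m : ℕ) (hm : 0 < m) (a b : ℤ → ℂ)
    (ha : (Function.support a).Finite) (hb : (Function.support b).Finite)
    (hclose : ∀ n r : ℤ, a n ≠ 0 → b r ≠ 0 → |n - r| < (m : ℤ)) :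
    ∑ᶠ n : ℤ, a n * b n =
      (1 / (m : ℂ)) *
        ∑ c ∈ Nat.divisors m,
          ∑ α ∈ (Finset.Icc 1 c).filter (fun α => Nat.gcd α c = 1),
            (∑ᶠ n : ℤ, a n * e ((α : ℝ) * (n : ℝ) / (c : ℝ))) *
              (∑ᶠ r : ℤ, b r * e (-((α : ℝ) * (r : ℝ) / (c : ℝ)))) := by
  classical
  have hm0 : (m : ℂ) ≠ 0 := Nat.cast_ne_zero.mpr hm.ne'
  set A := ha.toFinset with hA
  set B := hb.toFinset with hB
  have hsum_a : ∀ f : ℤ → ℂ, ∑ᶠ n : ℤ, a n * f n = ∑ n ∈ A, a n * f n := by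
    intro f
    apply finsum_eq_finset_sum_of_support_subset
    intro n hn
    simp only [Function.mem_support] at hn
    exact ha.mem_toFinset.mpr fun h => hn (by simp [h])
  have hsum_b : ∀ f : ℤ → ℂ, ∑ᶠ r : ℤ, b r * f r = ∑ r ∈ B, b r * f r := by
    intro f
    apply finsum_eq_finset_sum_of_support_subset
    intro r hr
    simp only [Function.mem_support] at hr
    exact hb.mem_toFinset.mpr fun h => hr (by simp [h])
  have hD : ∀ k : ℤ,
      ∑ c ∈ Nat.divisors m, ∑ α ∈ (Finset.Icc 1 c).filter (fun α => Nat.gcd α c = 1),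
        e ((α : ℝ) * (k : ℝ) / (c : ℝ)) = if (m : ℤ) ∣ k then (m : ℂ) else 0 := fun k =>
    (farey_sum m hm k).trans (sum_e m hm k)
  rw [hsum_a b]
  simp only [hsum_a, hsum_b]
  have main :
      ∑ c ∈ Nat.divisors m,
        ∑ α ∈ (Finset.Icc 1 c).filter (fun α => Nat.gcd α c = 1),
          (∑ n ∈ A, a n * e ((α : ℝ) * (n : ℝ) / (c : ℝ))) *
            (∑ r ∈ B, b r * e (-((α : ℝ) * (r : ℝ) / (c : ℝ)))) =
      (m : ℂ) * ∑ n ∈ A, a n * b n := by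
    calc
      ∑ c ∈ Nat.divisors m,
        ∑ α ∈ (Finset.Icc 1 c).filter (fun α => Nat.gcd α c = 1),
          (∑ n ∈ A, a n * e ((α : ℝ) * (n : ℝ) / (c : ℝ))) *
            (∑ r ∈ B, b r * e (-((α : ℝ) * (r : ℝ) / (c : ℝ))))
          = ∑ c ∈ Nat.divisors m,
              ∑ α ∈ (Finset.Icc 1 c).filter (fun α => Nat.gcd α c = 1),
                ∑ n ∈ A, ∑ r ∈ B,
                  a n * b r * e ((α : ℝ) * (((n - r : ℤ) : ℤ) : ℝ) / (c : ℝ)) := by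
          refine Finset.sum_congr rfl fun c _ => Finset.sum_congr rfl fun α _ => ?_
          rw [Finset.sum_mul_sum]
          refine Finset.sum_congr rfl fun n _ => Finset.sum_congr rfl fun r _ => ?_
          have : e ((α : ℝ) * (n : ℝ) / (c : ℝ)) * e (-((α : ℝ) * (r : ℝ) / (c : ℝ)))
              = e ((α : ℝ) * (((n - r : ℤ) : ℤ) : ℝ) / (c : ℝ)) := by
            rw [← e_add]
            congr 1
            push_cast
            ring
          rw [← this]
          ring
      _ = ∑ n ∈ A, ∑ r ∈ B,
            a n * b r *
              ∑ c ∈ Nat.divisors m,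
                ∑ α ∈ (Finset.Icc 1 c).filter (fun α => Nat.gcd α c = 1),
                  e ((α : ℝ) * (((n - r : ℤ) : ℤ) : ℝ) / (c : ℝ)) := by
          rw [swap_out]
          refine Finset.sum_congr rfl fun n _ => ?_
          rw [swap_out]
          refine Finset.sum_congr rfl fun r _ => ?_
          rw [Finset.mul_sum]
          exact Finset.sum_congr rfl fun c _ => by rw [Finset.mul_sum]
      _ = ∑ n ∈ A, ∑ r ∈ B,
            a n * b r * (if (m : ℤ) ∣ (n - r) then (m : ℂ) else 0) := by
          refine Finset.sum_congr rfl fun n _ => Finset.sum_congr rfl fun r _ => ?_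
          rw [hD (n - r)]
      _ = ∑ n ∈ A, ∑ r ∈ B, (if r = n then (m : ℂ) * (a n * b n) else 0) := by
          refine Finset.sum_congr rfl fun n hn => Finset.sum_congr rfl fun r hr => ?_
          have han : a n ≠ 0 := ha.mem_toFinset.mp hn
          have hbr : b r ≠ 0 := hb.mem_toFinset.mp hr
          by_cases hnr : r = n
          · subst hnr
            simp [Int.sub_self]
            ring
          · have : ¬ (m : ℤ) ∣ (n - r) := by
              intro hdvd
              have := Int.eq_zero_of_abs_lt_dvd hdvd (hclose n r han hbr)
              omega
            simp [this, hnr]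
      _ = ∑ n ∈ A, (if n ∈ B then (m : ℂ) * (a n * b n) else 0) := by
          exact Finset.sum_congr rfl fun n _ => Finset.sum_ite_eq' B n _
      _ = ∑ n ∈ A, (m : ℂ) * (a n * b n) := by
          refine Finset.sum_congr rfl fun n _ => ?_
          by_cases hnB : n ∈ B
          · rw [if_pos hnB]
          · rw [if_neg hnB]
            have : b n = 0 := by
              by_contra h
              exact hnB (hb.mem_toFinset.mpr h)
            simp [this]
      _ = (m : ℂ) * ∑ n ∈ A, a n * b n := by rw [Finset.mul_sum]
  rw [main, ← mul_assoc, one_div, inv_mul_cancel₀ hm0, one_mul]
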